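/- Let β = min{3/16, ‖T‖/4} and α = 1 − 3β for a Hermitian 4×4 matrix T with ‖T‖ ≤ 2, and define Ã₁ = diag(α,β,β,β) − ((α−β)/4)T, Ã₂ = diag(β,α,β,β) − ((α−β)/4)T, Ã₃ = diag(β,β,α,β) + ((α−β)/4)T, Ã₄ = diag(β,β,β,α) + ((α−β)/4)T. Then each Ã_i is positive semidefinite and Ã₁ + Ã₂ + Ã₃ + Ã₄ = I₄. -/

import Mathlib

open Matrix Complex
open scoped Matrix.Norms.L2Operator ComplexOrder

lemma aux_posSemidef (T : Matrix (Fin 4) (Fin 4) ℂ) (hT : T.IsHermitian)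
    (d : Fin 4 → ℝ) (c : ℝ) (hd : ∀ i, |c| * ‖T‖ ≤ d i) :
    (Matrix.diagonal (fun i => (d i : ℂ)) + (c : ℂ) • T).PosSemidef := by
  refine Matrix.PosSemidef.of_dotProduct_mulVec_nonneg ?_ ?_
  · apply Matrix.IsHermitian.add
    · exact Matrix.isHermitian_diagonal_of_self_adjoint _ (funext fun i => Complex.conj_ofReal _)
    · rw [Matrix.IsHermitian, Matrix.conjTranspose_smul, hT.eq, Complex.star_def,
        Complex.conj_ofReal]
  intro x
  set y : EuclideanSpace ℂ (Fin 4) := (WithLp.equiv 2 _).symm x with hy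
  set z : ℂ := star x ⬝ᵥ T *ᵥ x with hz
  have hzy : z = inner ℂ y ((WithLp.equiv 2 (Fin 4 → ℂ)).symm (T *ᵥ x)) := by
    rw [EuclideanSpace.inner_eq_star_dotProduct, dotProduct_comm]; rfl
  have hzabs : ‖z‖ ≤ ‖T‖ * ‖y‖ ^ 2 := by
    rw [hzy]
    calc ‖(inner ℂ y ((WithLp.equiv 2 (Fin 4 → ℂ)).symm (T *ᵥ x)) : ℂ)‖
        ≤ ‖y‖ * ‖(WithLp.equiv 2 (Fin 4 → ℂ)).symm (T *ᵥ x)‖ := norm_inner_le_norm _ _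
      _ ≤ ‖y‖ * (‖T‖ * ‖y‖) := by
          have hmv : ‖(WithLp.equiv 2 (Fin 4 → ℂ)).symm (T *ᵥ x)‖ ≤ ‖T‖ * ‖y‖ :=
            T.l2_opNorm_mulVec y
          have h0 : (0:ℝ) ≤ ‖y‖ := norm_nonneg _
          nlinarith
      _ = ‖T‖ * ‖y‖ ^ 2 := by ring
  have hynorm : ‖y‖ ^ 2 = ∑ i, Complex.normSq (x i) := by
    rw [EuclideanSpace.norm_eq, Real.sq_sqrt (by positivity)]
    congr 1; funext i
    rw [show y i = x i from rfl, Complex.sq_norm]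
  have hexp : star x ⬝ᵥ (Matrix.diagonal (fun i => (d i : ℂ)) + (c : ℂ) • T) *ᵥ x
      = ((∑ i, d i * Complex.normSq (x i) : ℝ) : ℂ) + (c : ℂ) * z := by
    rw [Matrix.add_mulVec, dotProduct_add, Matrix.smul_mulVec,
      dotProduct_smul]
    congr 1
    · push_cast
      simp only [dotProduct, Matrix.mulVec_diagonal, Pi.star_apply]
      congr 1; funext i
      rw [Complex.normSq_eq_conj_mul_self, Complex.star_def]
      ring
  rw [hexp, Complex.le_def]
  have hzim : z.im = 0 := by
    have hzr : star z = z := by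
      rw [hz]
      calc star (star x ⬝ᵥ T *ᵥ x) = star (T *ᵥ x) ⬝ᵥ x := by
            rw [← Matrix.star_dotProduct_star, star_star]
        _ = (star x ᵥ* Tᴴ) ⬝ᵥ x := by rw [Matrix.star_mulVec]
        _ = star x ⬝ᵥ T *ᵥ x := by rw [hT.eq, Matrix.dotProduct_mulVec]
    have h := congrArg Complex.im hzr
    rw [Complex.star_def, Complex.conj_im] at h
    linarith
  constructor
  · simp only [Complex.add_re, Complex.ofReal_re, Complex.mul_re, Complex.ofReal_im,
      Complex.zero_re]
    have h1 : -(|c| * ‖T‖ * (∑ i, Complex.normSq (x i))) ≤ c * z.re := by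
      have ha : |c * z.re| ≤ |c| * ‖T‖ * (∑ i, Complex.normSq (x i)) := by
        rw [abs_mul]
        have h2 : |z.re| ≤ ‖z‖ := Complex.abs_re_le_norm z
        have h3 := hzabs
        rw [hynorm] at h3
        have h4 : (0:ℝ) ≤ |c| := abs_nonneg c
        nlinarith [norm_nonneg z]
      linarith [neg_abs_le (c * z.re)]
    have h2 : |c| * ‖T‖ * (∑ i, Complex.normSq (x i)) ≤ ∑ i, d i * Complex.normSq (x i) := by
      rw [Finset.mul_sum]
      apply Finset.sum_le_sum
      intro i _
      exact mul_le_mul_of_nonneg_right (hd i) (Complex.normSq_nonneg _)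
    linarith
  · simp [hzim]

theorem stmt_18 (T : Matrix (Fin 4) (Fin 4) ℂ)
    (hT : T.IsHermitian) (hTnorm : ‖T‖ ≤ 2)
    (β : ℝ) (hβ : β = min (3 / 16) (‖T‖ / 4))
    (α : ℝ) (hα : α = 1 - 3 * β)
    (A₁ A₂ A₃ A₄ : Matrix (Fin 4) (Fin 4) ℂ)
    (hA₁ : A₁ = Matrix.diagonal ![(α : ℂ), β, β, β] - (((α - β) / 4 : ℝ) : ℂ) • T)
    (hA₂ : A₂ = Matrix.diagonal ![(β : ℂ), α, β, β] - (((α - β) / 4 : ℝ) : ℂ) • T)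
    (hA₃ : A₃ = Matrix.diagonal ![(β : ℂ), β, α, β] + (((α - β) / 4 : ℝ) : ℂ) • T)
    (hA₄ : A₄ = Matrix.diagonal ![(β : ℂ), β, β, α] + (((α - β) / 4 : ℝ) : ℂ) • T) :
    A₁.PosSemidef ∧ A₂.PosSemidef ∧ A₃.PosSemidef ∧ A₄.PosSemidef ∧
      A₁ + A₂ + A₃ + A₄ = 1 := by
  have hTn0 : (0:ℝ) ≤ ‖T‖ := norm_nonneg T
  have hβ0 : 0 ≤ β := by rw [hβ]; positivity
  have hβle : β ≤ 3 / 16 := by rw [hβ]; exact min_le_left _ _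
  have hβα : β ≤ α := by rw [hα]; linarith
  have key : (α - β) / 4 * ‖T‖ ≤ β := by
    rcases le_total ((3:ℝ) / 16) (‖T‖ / 4) with h | h
    · rw [hβ, min_eq_left h] at *
      rw [hα]
      nlinarith
    · rw [hβ, min_eq_right h] at *
      rw [hα]
      nlinarith
  set c : ℝ := (α - β) / 4 with hc
  have hc0 : 0 ≤ c := by rw [hc]; linarith
  have habs : |c| = c := abs_of_nonneg hc0
  have habsneg : |(-c)| = c := by rw [abs_neg, habs]
  have hkeyd : ∀ (d : Fin 4 → ℝ) (c' : ℝ), |c'| = c → (∀ i, d i = β ∨ d i = α) →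
      ∀ i, |c'| * ‖T‖ ≤ d i := by
    intro d c' hc' hdi i
    rw [hc']
    rcases hdi i with h | h <;> rw [h] <;> nlinarith
  have hps : ∀ (d : Fin 4 → ℝ) (c' : ℝ), |c'| = c → (∀ i, d i = β ∨ d i = α) →
      (Matrix.diagonal (fun i => (d i : ℂ)) + (c' : ℂ) • T).PosSemidef := by
    intro d c' hc' hdi
    exact aux_posSemidef T hT d c' (hkeyd d c' hc' hdi)
  refine ⟨?_, ?_, ?_, ?_, ?_⟩
  · have hv : ![(α : ℂ), β, β, β] = fun i => ((![α, β, β, β] : Fin 4 → ℝ) i : ℂ) := by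
      funext i; fin_cases i <;> simp
    have := hps ![α, β, β, β] (-c) habsneg (by intro i; fin_cases i <;> simp)
    push_cast at this
    rw [neg_smul, ← sub_eq_add_neg, ← hv] at this
    rwa [hA₁]
  · have hv : ![(β : ℂ), α, β, β] = fun i => ((![β, α, β, β] : Fin 4 → ℝ) i : ℂ) := by
      funext i; fin_cases i <;> simp
    have := hps ![β, α, β, β] (-c) habsneg (by intro i; fin_cases i <;> simp)
    push_cast at this
    rw [neg_smul, ← sub_eq_add_neg, ← hv] at this
    rwa [hA₂]
  · have hv : ![(β : ℂ), β, α, β] = fun i => ((![β, β, α, β] : Fin 4 → ℝ) i : ℂ) := by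
      funext i; fin_cases i <;> simp
    have := hps ![β, β, α, β] c habs (by intro i; fin_cases i <;> simp)
    rw [← hv] at this
    rwa [hA₃]
  · have hv : ![(β : ℂ), β, β, α] = fun i => ((![β, β, β, α] : Fin 4 → ℝ) i : ℂ) := by
      funext i; fin_cases i <;> simp
    have := hps ![β, β, β, α] c habs (by intro i; fin_cases i <;> simp)
    rw [← hv] at this
    rwa [hA₄]
  · rw [hA₁, hA₂, hA₃, hA₄]
    ext i j
    fin_cases i <;> fin_cases j <;>
      simp [Matrix.add_apply, Matrix.sub_apply, Matrix.one_apply, Matrix.diagonal_apply, hα] <;>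
      ring_nf
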